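/- Let n ≥ 2, let λ, ν ∈ ℂ with ν − λ a nonnegative integer, and let 1 ≤ p ≤ n−1. Then x_p·𝒦_{λ,ν} = −2 ∂_p 𝒦_{λ+1,ν−1} as tempered distributions on ℝ^n. -/

import Mathlib

/-- Partial derivative ∂_p of a complex-valued function on ℝ^n. -/
noncomputable def pd {n : ℕ} (p : Fin n) (f : (Fin n → ℝ) → ℂ) : (Fin n → ℝ) → ℂ :=
  fun x => fderiv ℝ f x (Pi.single p 1)

/-- Δ' = ∂_1² + ⋯ + ∂_{n−1}², the Laplacian in the first n−1 variables on ℝ^n. -/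
noncomputable def lapP {n : ℕ} (f : (Fin n → ℝ) → ℂ) : (Fin n → ℝ) → ℂ :=
  fun x => ∑ j ∈ Finset.univ.filter (fun j : Fin n => (j : ℕ) < n - 1), pd j (pd j f) x

/-- ∂_n, the partial derivative in the last variable on ℝ^n. -/
noncomputable def pdLast {n : ℕ} (f : (Fin n → ℝ) → ℂ) : (Fin n → ℝ) → ℂ :=
  if h : 0 < n then pd ⟨n - 1, by omega⟩ f else 0

/-- The coefficient of z^{l−2k} in the renormalized Gegenbauer polynomial
C̃_l^α(z) = Σ_{k=0}^{⌊l/2⌋} (−1)^k (∏_{m=⌊(l+1)/2⌋}^{l−k−1}(α+m)) (2z)^{l−2k}/(k!(l−2k)!). -/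
noncomputable def gegenCoeff (α : ℂ) (l k : ℕ) : ℂ :=
  (-1 : ℂ) ^ k * (∏ m ∈ Finset.Ico ((l + 1) / 2) (l - k), (α + (m : ℂ))) *
    2 ^ (l - 2 * k) / ((Nat.factorial k : ℂ) * (Nat.factorial (l - 2 * k) : ℂ))

/-- The action on a test function `φ` of the tempered distribution
`𝒦_{λ,ν} = Σ_{k=0}^{⌊l/2⌋} a_k (−1)^k (Δ')^k ∂_n^{l−2k} δ` on ℝ^n, where `l = ν − λ`
and `a_k` are the coefficients of `C̃_l^{λ−(n−1)/2}`; each `∂` contributes a sign `−1`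
and δ evaluates at 0.  By convention `𝒦_{λ,ν} = 0` when `l < 0`. -/
noncomputable def Kact (n : ℕ) (lam : ℂ) (l : ℤ) (φ : (Fin n → ℝ) → ℂ) : ℂ :=
  if 0 ≤ l then
    ∑ k ∈ Finset.range (l.toNat / 2 + 1),
      gegenCoeff (lam - ((n : ℂ) - 1) / 2) l.toNat k *
        ((-1 : ℂ) ^ k * ((-1 : ℂ) ^ (l.toNat - 2 * k) *
          (pdLast (n := n))^[l.toNat - 2 * k] ((lapP (n := n))^[k] φ) 0))
  else 0

/-- γ(μ, a) := 1 if a is odd, μ + a/2 if a is even. -/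
noncomputable def gam (mu : ℂ) (a : ℕ) : ℂ := if a % 2 = 1 then 1 else mu + ((a / 2 : ℕ) : ℂ)

-- ==================== auxiliary development ====================
section Aux

variable {n : ℕ}

abbrev Sm {n : ℕ} (f : (Fin n → ℝ) → ℂ) : Prop := ContDiff ℝ ((⊤ : ℕ∞) : WithTop ℕ∞) f

lemma Sm.diff {f : (Fin n → ℝ) → ℂ} (hf : Sm f) : Differentiable ℝ f :=
  hf.differentiable (by simp)

lemma smoothX (p : Fin n) : Sm (fun x : Fin n → ℝ => ((x p : ℝ) : ℂ)) := by
  exact (Complex.ofRealCLM.comp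
    (ContinuousLinearMap.proj p : (Fin n → ℝ) →L[ℝ] ℝ)).contDiff

lemma fderivX (p : Fin n) (x : Fin n → ℝ) (j : Fin n) :
    fderiv ℝ (fun x : Fin n → ℝ => ((x p : ℝ) : ℂ)) x (Pi.single j 1)
      = if j = p then 1 else 0 := by
  rw [show (fun x : Fin n → ℝ => ((x p : ℝ) : ℂ))
      = ⇑(Complex.ofRealCLM.comp (ContinuousLinearMap.proj p)) from rfl,
    ContinuousLinearMap.fderiv]
  rcases eq_or_ne j p with h | h
  · simp [Pi.single_apply, h]
  · simp [Pi.single_apply, h, Ne.symm h]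

lemma pd_smooth {f : (Fin n → ℝ) → ℂ} (hf : Sm f) (p : Fin n) : Sm (pd p f) := by
  have : pd p f = fun x =>
      (ContinuousLinearMap.apply ℝ ℂ (Pi.single p 1 : Fin n → ℝ)) (fderiv ℝ f x) := rfl
  rw [this]
  exact (ContinuousLinearMap.apply ℝ ℂ _).contDiff.comp
    (hf.fderiv_right (m := ((⊤:ℕ∞) : WithTop ℕ∞)) (by exact_mod_cast le_top))

lemma pd_add {f g : (Fin n → ℝ) → ℂ} (p : Fin n) (x : Fin n → ℝ)
    (hf : DifferentiableAt ℝ f x) (hg : DifferentiableAt ℝ g x) :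
    pd p (fun y => f y + g y) x = pd p f x + pd p g x := by
  simp [pd, fderiv_fun_add hf hg]

lemma pd_const_mul {f : (Fin n → ℝ) → ℂ} (p : Fin n) (c : ℂ) (x : Fin n → ℝ)
    (hf : DifferentiableAt ℝ f x) :
    pd p (fun y => c * f y) x = c * pd p f x := by
  simp [pd, fderiv_const_mul hf c]

lemma pd_X_mul {f : (Fin n → ℝ) → ℂ} (p j : Fin n) (x : Fin n → ℝ)
    (hf : DifferentiableAt ℝ f x) :
    pd j (fun y => ((y p : ℝ) : ℂ) * f y) x
      = ((x p : ℝ) : ℂ) * pd j f x + (if j = p then f x else 0) := by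
  have hX : DifferentiableAt ℝ (fun y : Fin n → ℝ => ((y p : ℝ) : ℂ)) x :=
    ((smoothX p).diff x)
  simp only [pd, fderiv_fun_mul hX hf]
  rw [ContinuousLinearMap.add_apply, ContinuousLinearMap.smul_apply,
    ContinuousLinearMap.smul_apply, fderivX]
  rcases eq_or_ne j p with h | h <;> simp [h, smul_eq_mul, mul_comm]

lemma pd_comm {f : (Fin n → ℝ) → ℂ} (hf : Sm f) (i j : Fin n) (x : Fin n → ℝ) :
    pd i (pd j f) x = pd j (pd i f) x := by
  have hd : DifferentiableAt ℝ (fderiv ℝ f) x :=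
    ((hf.fderiv_right (m := ((⊤:ℕ∞) : WithTop ℕ∞)) (by exact_mod_cast le_top)).differentiable
      (by simp) x)
  have key : ∀ v w : Fin n → ℝ,
      fderiv ℝ (fun y => fderiv ℝ f y v) x w = fderiv ℝ (fderiv ℝ f) x w v := by
    intro v w
    rw [fderiv_clm_apply hd (differentiableAt_const v)]
    simp
  have hsymm : ∀ v w, fderiv ℝ (fderiv ℝ f) x v w = fderiv ℝ (fderiv ℝ f) x w v := by
    intro v w
    exact second_derivative_symmetric (f' := fderiv ℝ f)
      (fun y => (hf.diff y).hasFDerivAt) (hd.hasFDerivAt) v w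
  have e1 : pd i (pd j f) x
      = fderiv ℝ (fun y => fderiv ℝ f y (Pi.single j 1)) x (Pi.single i 1) := rfl
  have e2 : pd j (pd i f) x
      = fderiv ℝ (fun y => fderiv ℝ f y (Pi.single i 1)) x (Pi.single j 1) := rfl
  rw [e1, e2, key, key, hsymm]

end Aux


section Aux2
variable {n : ℕ}

lemma Sm.xmul {f : (Fin n → ℝ) → ℂ} (hf : Sm f) (p : Fin n) :
    Sm (fun x => ((x p : ℝ) : ℂ) * f x) := (smoothX p).mul hf

lemma lapP_smooth {f : (Fin n → ℝ) → ℂ} (hf : Sm f) : Sm (lapP f) := by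
  have : lapP f = fun x => ∑ j ∈ Finset.univ.filter (fun j : Fin n => (j:ℕ) < n - 1),
      pd j (pd j f) x := rfl
  rw [this]
  exact ContDiff.sum (fun j _ => pd_smooth (pd_smooth hf j) j)

lemma lapP_iter_smooth {f : (Fin n → ℝ) → ℂ} (hf : Sm f) : ∀ k, Sm (lapP^[k] f)
  | 0 => hf
  | (k+1) => by
      rw [Function.iterate_succ_apply']
      exact lapP_smooth (lapP_iter_smooth hf k)

lemma pd_sum {ι : Type*} (s : Finset ι) (F : ι → (Fin n → ℝ) → ℂ) (q : Fin n) (x : Fin n → ℝ)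
    (h : ∀ j ∈ s, DifferentiableAt ℝ (F j) x) :
    pd q (fun y => ∑ j ∈ s, F j y) x = ∑ j ∈ s, pd q (F j) x := by
  simp [pd, fderiv_fun_sum h]

lemma pd_lapP {f : (Fin n → ℝ) → ℂ} (hf : Sm f) (q : Fin n) :
    pd q (lapP f) = lapP (pd q f) := by
  funext x
  have h1 : pd q (lapP f) x
      = ∑ j ∈ Finset.univ.filter (fun j : Fin n => (j:ℕ) < n - 1), pd q (pd j (pd j f)) x :=
    pd_sum _ _ q x (fun j _ => ((pd_smooth (pd_smooth hf j) j).diff x))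
  rw [h1]
  refine Finset.sum_congr rfl (fun j _ => ?_)
  have h2 : pd q (pd j f) = pd j (pd q f) := funext (fun y => pd_comm hf q j y)
  rw [pd_comm (pd_smooth hf j) q j, h2]

lemma pd_lapP_iter {f : (Fin n → ℝ) → ℂ} (hf : Sm f) (q : Fin n) :
    ∀ k, pd q (lapP^[k] f) = lapP^[k] (pd q f)
  | 0 => rfl
  | (k+1) => by
      rw [Function.iterate_succ_apply', Function.iterate_succ_apply',
        pd_lapP (lapP_iter_smooth hf k) q, pd_lapP_iter hf q k]

lemma lapP_add_cm {g h : (Fin n → ℝ) → ℂ} (hg : Sm g) (hh : Sm h) (c : ℂ) :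
    lapP (fun y => g y + c * h y) = fun y => lapP g y + c * lapP h y := by
  funext x
  have hpd : ∀ j : Fin n, pd j (fun y => g y + c * h y)
      = fun y => pd j g y + c * pd j h y := by
    intro j
    funext y
    rw [pd_add j y (hg.diff y) ((hh.diff.const_mul c) y), pd_const_mul j c y (hh.diff y)]
  have : lapP (fun y => g y + c * h y) x
      = ∑ j ∈ Finset.univ.filter (fun j : Fin n => (j:ℕ) < n - 1),
        (pd j (pd j g) x + c * pd j (pd j h) x) := by
    refine Finset.sum_congr rfl (fun j _ => ?_)
    rw [hpd j]
    rw [pd_add j x ((pd_smooth hg j).diff x) (((pd_smooth hh j).diff.const_mul c) x),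
      pd_const_mul j c x ((pd_smooth hh j).diff x)]
  rw [this, Finset.sum_add_distrib, ← Finset.mul_sum]
  rfl

lemma lapP_X_mul {f : (Fin n → ℝ) → ℂ} (hf : Sm f) {p : Fin n} (hp : (p : ℕ) < n - 1) :
    lapP (fun x => ((x p : ℝ) : ℂ) * f x)
      = fun x => ((x p : ℝ) : ℂ) * lapP f x + 2 * pd p f x := by
  funext x
  have hpd : ∀ j : Fin n, pd j (fun y => ((y p : ℝ) : ℂ) * f y)
      = fun y => ((y p : ℝ) : ℂ) * pd j f y + (if j = p then f y else 0) := by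
    intro j; funext y; exact pd_X_mul p j y (hf.diff y)
  have step : ∀ j : Fin n, pd j (pd j (fun y => ((y p : ℝ) : ℂ) * f y)) x
      = ((x p : ℝ) : ℂ) * pd j (pd j f) x + (if j = p then 2 * pd p f x else 0) := by
    intro j
    rw [hpd j]
    rcases eq_or_ne j p with rfl | h
    · have he : (fun y => ((y j : ℝ) : ℂ) * pd j f y + (if j = j then f y else 0))
          = fun y => ((y j : ℝ) : ℂ) * pd j f y + f y := by
        funext y; simp
      rw [he, pd_add j x (Sm.diff ((smoothX j).mul (pd_smooth hf j)) x) (hf.diff x),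
        pd_X_mul j j x ((pd_smooth hf j).diff x)]
      simp; ring
    · have : (fun y => ((y p : ℝ) : ℂ) * pd j f y + (if j = p then f y else 0))
          = fun y => ((y p : ℝ) : ℂ) * pd j f y := by
        funext y; simp [h]
      rw [this, pd_X_mul p j x ((pd_smooth hf j).diff x)]
      simp [h]
  have : lapP (fun y => ((y p : ℝ) : ℂ) * f y) x
      = ∑ j ∈ Finset.univ.filter (fun j : Fin n => (j:ℕ) < n - 1),
        (((x p : ℝ) : ℂ) * pd j (pd j f) x + (if j = p then 2 * pd p f x else 0)) :=
    Finset.sum_congr rfl (fun j _ => step j)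
  rw [this, Finset.sum_add_distrib, ← Finset.mul_sum, Finset.sum_ite_eq']
  simp [lapP, hp]

lemma key1 {f : (Fin n → ℝ) → ℂ} (hf : Sm f) {p : Fin n} (hp : (p : ℕ) < n - 1) :
    ∀ k : ℕ, lapP^[k] (fun x => ((x p : ℝ) : ℂ) * f x)
      = fun x => ((x p : ℝ) : ℂ) * lapP^[k] f x + (2 * (k : ℂ)) * lapP^[k-1] (pd p f) x
  | 0 => by funext x; simp
  | (k+1) => by
      rw [Function.iterate_succ_apply', key1 hf hp k,
        lapP_add_cm ((lapP_iter_smooth hf k).xmul p)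
          (lapP_iter_smooth (pd_smooth hf p) (k-1)) (2 * (k:ℂ)),
        lapP_X_mul (lapP_iter_smooth hf k) hp]
      funext x
      rw [← Function.iterate_succ_apply' lapP k f]
      have hcomm : pd p (lapP^[k] f) = lapP^[k] (pd p f) := pd_lapP_iter hf p k
      rcases Nat.eq_zero_or_pos k with hk | hk
      · subst hk; simp [hcomm]
      · have h1 : lapP (lapP^[k-1] (pd p f)) = lapP^[k] (pd p f) := by
          have h3 : (k - 1).succ = k := by omega
          rw [← Function.iterate_succ_apply' lapP (k-1) (pd p f), h3]
        have h2 : (k+1) - 1 = k := rfl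
        rw [h1, h2, hcomm]
        push_cast
        ring

end Aux2

section Aux3
variable {n : ℕ}

lemma pdLast_eq (hn : 0 < n) (f : (Fin n → ℝ) → ℂ) :
    pdLast f = pd ⟨n - 1, by omega⟩ f := dif_pos hn

lemma pdLast_smooth {f : (Fin n → ℝ) → ℂ} (hf : Sm f) : Sm (pdLast f) := by
  rcases Nat.eq_zero_or_pos n with h | h
  · subst h
    have : pdLast f = (0 : (Fin 0 → ℝ) → ℂ) := dif_neg (by omega)
    rw [this]; exact contDiff_const
  · rw [pdLast_eq h]; exact pd_smooth hf _

lemma key2 (hn : 0 < n) {p : Fin n} (hp : (p : ℕ) < n - 1)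
    {g h : (Fin n → ℝ) → ℂ} (hg : Sm g) (hh : Sm h) (c : ℂ) :
    ∀ m : ℕ, pdLast^[m] (fun x => ((x p : ℝ) : ℂ) * g x + c * h x)
      = fun x => ((x p : ℝ) : ℂ) * pdLast^[m] g x + c * pdLast^[m] h x
  | 0 => rfl
  | (m+1) => by
      have hq : (⟨n - 1, by omega⟩ : Fin n) ≠ p := by
        intro he
        have : ((⟨n - 1, by omega⟩ : Fin n) : ℕ) = (p : ℕ) := by rw [he]
        simp at this; omega
      have hstep : pdLast (fun x => ((x p : ℝ) : ℂ) * g x + c * h x)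
          = fun x => ((x p : ℝ) : ℂ) * pdLast g x + c * pdLast h x := by
        rw [pdLast_eq hn, pdLast_eq hn, pdLast_eq hn]
        funext x
        rw [pd_add _ x (Sm.diff ((smoothX p).mul hg) x) (((hh.diff).const_mul c) x),
          pd_X_mul p _ x (hg.diff x), pd_const_mul _ c x (hh.diff x), if_neg hq]
        ring
      rw [Function.iterate_succ_apply, hstep,
        key2 hn hp (pdLast_smooth hg) (pdLast_smooth hh) c m,
        ← Function.iterate_succ_apply pdLast m g, ← Function.iterate_succ_apply pdLast m h]

lemma key3 (hn : 2 ≤ n) {p : Fin n} (hp : (p : ℕ) < n - 1)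
    {f : (Fin n → ℝ) → ℂ} (hf : Sm f) (k m : ℕ) :
    pdLast^[m] (lapP^[k] (fun x => ((x p : ℝ) : ℂ) * f x)) 0
      = (2 * (k : ℂ)) * pdLast^[m] (lapP^[k-1] (pd p f)) 0 := by
  rw [key1 hf hp k,
    key2 (by omega) hp (lapP_iter_smooth hf k)
      (lapP_iter_smooth (pd_smooth hf p) (k-1)) _ m]
  simp

lemma coeff_shift (α : ℂ) (l k : ℕ) (hk : 2 * (k + 1) ≤ l) :
    gegenCoeff (α + 1) (l - 2) k = -((k : ℂ) + 1) * gegenCoeff α l (k + 1) := by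
  have hprod : (∏ m ∈ Finset.Ico ((l - 2 + 1) / 2) ((l - 2) - k), ((α + 1) + (m : ℂ)))
      = ∏ m ∈ Finset.Ico ((l + 1) / 2) (l - (k + 1)), (α + (m : ℂ)) := by
    rw [Finset.prod_Ico_eq_prod_range, Finset.prod_Ico_eq_prod_range]
    have hlen : (l - 2 - k) - (l - 2 + 1) / 2 = (l - (k + 1)) - (l + 1) / 2 := by omega
    rw [hlen]
    refine Finset.prod_congr rfl (fun i _ => ?_)
    have hidx : (l - 2 + 1) / 2 + i + 1 = (l + 1) / 2 + i := by omega
    have : ((((l + 1) / 2 + i : ℕ)) : ℂ) = (((l - 2 + 1) / 2 + i : ℕ) : ℂ) + 1 := by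
      rw [← hidx]; push_cast; ring
    rw [this]; push_cast; ring
  have hexp : (l - 2) - 2 * k = l - 2 * (k + 1) := by omega
  have hfac : ((Nat.factorial (k + 1) : ℂ)) = ((k : ℂ) + 1) * (Nat.factorial k : ℂ) := by
    rw [Nat.factorial_succ]; push_cast; ring
  unfold gegenCoeff
  rw [hprod, hexp, hfac]
  have h1 : (Nat.factorial k : ℂ) ≠ 0 := Nat.cast_ne_zero.mpr (Nat.factorial_ne_zero k)
  have h2 : (Nat.factorial (l - 2 * (k + 1)) : ℂ) ≠ 0 :=
    Nat.cast_ne_zero.mpr (Nat.factorial_ne_zero _)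
  have h3 : ((k : ℂ) + 1) ≠ 0 := by
    intro h
    have := congrArg Complex.re h
    simp at this
    nlinarith [this]
  field_simp
  ring

end Aux3

/-- `x_p·𝒦_{λ,ν} = −2 ∂_p 𝒦_{λ+1,ν−1}` as tempered distributions on ℝ^n, tested against an
arbitrary Schwartz function `φ`; `(x_p·T)(φ) = T(x_p φ)` and `(∂_p T)(φ) = −T(∂_p φ)`. -/
theorem stmt10 (n : ℕ) (hn : 2 ≤ n) (lam nu : ℂ) (l : ℤ) (hl : 0 ≤ l)
    (hln : nu - lam = (l : ℂ)) (p : Fin n) (hp : (p : ℕ) < n - 1)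
    (φ : SchwartzMap (Fin n → ℝ) ℂ) :
    Kact n lam l (fun x => (x p : ℂ) * φ x)
      = -2 * (-(Kact n (lam + 1) (l - 2) (pd p ⇑φ))) := by
  have hφ : Sm (⇑φ) := φ.smooth ⊤
  simp only [Kact]
  rw [if_pos hl]
  simp only [key3 hn hp hφ]
  rw [Finset.sum_range_succ']
  have hzero : gegenCoeff (lam - ((n : ℂ) - 1) / 2) l.toNat 0 *
      ((-1:ℂ)^0 * ((-1:ℂ)^(l.toNat - 2*0) *
        ((2 * ((0:ℕ) : ℂ)) * (pdLast (n:=n))^[l.toNat - 2*0] ((lapP (n:=n))^[0-1] (pd p ⇑φ)) 0))) = 0 := by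
    simp
  rw [hzero, add_zero]
  rcases lt_or_ge l 2 with hl2 | hl2
  · have hL : l.toNat / 2 = 0 := by omega
    rw [if_neg (by omega : ¬ (0:ℤ) ≤ l - 2), hL]
    simp
  · rw [if_pos (by omega : (0:ℤ) ≤ l - 2)]
    have hT : (l - 2).toNat = l.toNat - 2 := by omega
    have hR : (l - 2).toNat / 2 + 1 = l.toNat / 2 := by omega
    have hα1 : lam + 1 - ((n : ℂ) - 1) / 2 = (lam - ((n : ℂ) - 1) / 2) + 1 := by ring
    rw [hR, hα1, neg_mul_neg, Finset.mul_sum]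
    refine Finset.sum_congr rfl (fun k hk => ?_)
    have hk' : 2 * (k + 1) ≤ l.toNat := by
      have := Finset.mem_range.mp hk; omega
    have e1 : l.toNat - 2 * (k + 1) = l.toNat - 2 - 2 * k := by omega
    have e2 : k + 1 - 1 = k := by omega
    rw [hT, coeff_shift (lam - ((n : ℂ) - 1) / 2) l.toNat k hk', e1, e2]
    push_cast
    ring
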